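/- If γ : [a,b] → ℂ is a piecewise C¹ curve whose image is contained in {z ∈ ℂ : Re z ≠ 0}, then Ind(γ) < 1/2. -/

import Mathlib

open Complex Filter Set Topology

noncomputable section

/-- `γ` is a piecewise `C¹` curve on `[a,b]`: it is continuous on `[a,b]` and there is a
finite partition `a = t₀ < t₁ < ⋯ < tₙ = b` on each closed subinterval of which `γ` is `C¹`. -/
def PiecewiseC1On (γ : ℝ → ℂ) (a b : ℝ) : Prop :=
  ContinuousOn γ (Set.Icc a b) ∧
    ∃ (n : ℕ) (t : Fin (n + 1) → ℝ),
      t 0 = a ∧ t (Fin.last n) = b ∧ StrictMono t ∧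
        ∀ i : Fin n, ContDiffOn ℝ 1 γ (Set.Icc (t i.castSucc) (t i.succ))

/-- The index (real winding number) of the curve `γ : [a,b] → ℂ∖{0}` with respect to `0`. -/
def indexAlong (γ : ℝ → ℂ) (a b : ℝ) : ℝ :=
  (1 / (2 * Real.pi * Complex.I) * ∫ t in a..b, deriv γ t / γ t).re

open MeasureTheory intervalIntegral in
lemma piece_aux (γ : ℝ → ℂ) (c d : ℝ) (hcd : c < d)
    (h1 : ContDiffOn ℝ 1 γ (Set.Icc c d))
    (him : ∀ t ∈ Set.Icc c d, (γ t).re ≠ 0) :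
    IntervalIntegrable (fun t => deriv γ t / γ t) volume c d ∧
    ∫ t in c..d, (deriv γ t / γ t).im =
      Real.arctan ((γ d).im / (γ d).re) - Real.arctan ((γ c).im / (γ c).re) := by
  have hγne : ∀ t ∈ Set.Icc c d, γ t ≠ 0 := fun t ht h0 => him t ht (by simp [h0])
  set w := derivWithin γ (Set.Icc c d) with hw
  have hwc : ContinuousOn w (Set.Icc c d) :=
    h1.continuousOn_derivWithin (uniqueDiffOn_Icc hcd) le_rfl
  have hcont : ContinuousOn (fun t => w t / γ t) (Set.Icc c d) :=
    hwc.div h1.continuousOn hγne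
  have hii : IntervalIntegrable (fun t => w t / γ t) volume c d :=
    (hcont.mono (by rw [Set.uIcc_of_le hcd.le])).intervalIntegrable
  have hae : (fun t => w t / γ t) =ᵐ[volume.restrict (Set.uIoc c d)]
      fun t => deriv γ t / γ t := by
    rw [Set.uIoc_of_le hcd.le, Measure.restrict_congr_set Ioo_ae_eq_Ioc.symm]
    filter_upwards [ae_restrict_mem measurableSet_Ioo] with t ht
    rw [hw, derivWithin_of_mem_nhds (Icc_mem_nhds ht.1 ht.2)]
  have hiic : IntervalIntegrable (fun t => deriv γ t / γ t) volume c d := hii.congr_ae hae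
  refine ⟨hiic, ?_⟩
  have hintIm : IntervalIntegrable (fun t => (deriv γ t / γ t).im) volume c d :=
    ⟨hiic.1.im, hiic.2.im⟩
  have hfc : ContinuousOn (fun t => Real.arctan ((γ t).im / (γ t).re)) (Set.Icc c d) :=
    Real.continuous_arctan.comp_continuousOn
      (((Complex.continuous_im.comp_continuousOn h1.continuousOn)).div
        (Complex.continuous_re.comp_continuousOn h1.continuousOn) him)
  have hder : ∀ t ∈ Set.Ioo c d,
      HasDerivAt (fun s => Real.arctan ((γ s).im / (γ s).re)) ((deriv γ t / γ t).im) t := by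
    intro t ht
    have hγd : HasDerivAt γ (deriv γ t) t :=
      ((h1.contDiffAt (Icc_mem_nhds ht.1 ht.2)).differentiableAt one_ne_zero).hasDerivAt
    have hx : HasDerivAt (fun s => (γ s).re) (deriv γ t).re t :=
      Complex.reCLM.hasFDerivAt.comp_hasDerivAt t hγd
    have hy : HasDerivAt (fun s => (γ s).im) (deriv γ t).im t :=
      Complex.imCLM.hasFDerivAt.comp_hasDerivAt t hγd
    have hxne : (γ t).re ≠ 0 := him t (Set.Ioo_subset_Icc_self ht)
    have hu : HasDerivAt (fun s => (γ s).im / (γ s).re)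
        (((deriv γ t).im * (γ t).re - (γ t).im * (deriv γ t).re) / ((γ t).re ^ 2)) t :=
      hy.div hx hxne
    have := (Real.hasDerivAt_arctan ((γ t).im / (γ t).re)).comp t hu
    refine this.congr_deriv (Eq.symm ?_)
    have hns : (γ t).re * (γ t).re + (γ t).im * (γ t).im ≠ 0 := by
      intro h
      exact hxne (by nlinarith [mul_self_nonneg (γ t).re, mul_self_nonneg (γ t).im])
    rw [Complex.div_im, Complex.normSq_apply]
    field_simp [hns]
  rw [integral_eq_sub_of_hasDerivAt_of_le hcd.le hfc hder hintIm]

open MeasureTheory in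
lemma intervalIntegral_im (f : ℝ → ℂ) (a b : ℝ) (h : IntervalIntegrable f volume a b) :
    (∫ t in a..b, f t).im = ∫ t in a..b, (f t).im := by
  have h1 : ∫ t in Ioc a b, (f t).im ∂volume = (∫ t in Ioc a b, f t ∂volume).im :=
    integral_im h.1
  have h2 : ∫ t in Ioc b a, (f t).im ∂volume = (∫ t in Ioc b a, f t ∂volume).im :=
    integral_im h.2
  rw [intervalIntegral, intervalIntegral, Complex.sub_im, ← h1, ← h2]

open MeasureTheory intervalIntegral in
/-- A piecewise `C¹` curve with image in `{Re z ≠ 0}` has index less than `1/2`. -/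
theorem indexAlong_lt_half (γ : ℝ → ℂ) (a b : ℝ) (hab : a ≤ b)
    (hγ : PiecewiseC1On γ a b)
    (him : ∀ t ∈ Set.Icc a b, (γ t).re ≠ 0) :
    indexAlong γ a b < 1 / 2 := by
  obtain ⟨hcontγ, n, t, h0, hlast, hmono, hC1⟩ := hγ
  set F : ℝ → ℝ := fun s => Real.arctan ((γ s).im / (γ s).re) with hF
  set T : ℕ → ℝ := fun k => t ⟨min k n, Nat.lt_succ_of_le (min_le_right _ _)⟩ with hT
  have hT0 : T 0 = a := by
    rw [hT]; simpa using h0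
  have hTn : T n = b := by
    rw [hT]
    simp only [min_self]
    exact hlast
  have hpiece : ∀ k (hk : k < n), t (⟨k, hk⟩ : Fin n).castSucc = T k ∧
      t (⟨k, hk⟩ : Fin n).succ = T (k + 1) := by
    intro k hk
    constructor <;> · congr 1; ext; simp [Nat.min_eq_left, hk.le, hk, Nat.succ_le_of_lt hk]
  have hsub : ∀ k (hk : k < n), Set.Icc (T k) (T (k+1)) ⊆ Set.Icc a b := by
    intro k hk
    apply Set.Icc_subset_Icc
    · rw [← h0, ← (hpiece k hk).1]; exact hmono.monotone (Fin.zero_le _)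
    · rw [← hlast, ← (hpiece k hk).2]; exact hmono.monotone (Fin.le_last _)
  have hlt : ∀ k (hk : k < n), T k < T (k+1) := by
    intro k hk
    rw [← (hpiece k hk).1, ← (hpiece k hk).2]
    exact hmono Fin.castSucc_lt_succ
  have hkey : ∀ k (hk : k < n),
      IntervalIntegrable (fun s => deriv γ s / γ s) volume (T k) (T (k+1)) ∧
      ∫ s in T k..T (k+1), (deriv γ s / γ s).im = F (T (k+1)) - F (T k) := by
    intro k hk
    have := piece_aux γ (T k) (T (k+1)) (hlt k hk)
      (by rw [← (hpiece k hk).1, ← (hpiece k hk).2]; exact hC1 ⟨k, hk⟩)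
      (fun s hs => him s (hsub k hk hs))
    exact this
  have hint : IntervalIntegrable (fun s => deriv γ s / γ s) volume a b := by
    rw [← hT0, ← hTn]
    exact IntervalIntegrable.trans_iterate (fun k hk => (hkey k hk).1)
  have hintIm : ∀ k < n, IntervalIntegrable (fun s => (deriv γ s / γ s).im) volume (T k) (T (k+1)) :=
    fun k hk => ⟨(hkey k hk).1.1.im, (hkey k hk).1.2.im⟩
  have hsum : ∫ s in a..b, (deriv γ s / γ s).im = F b - F a := by
    rw [← hT0, ← hTn, ← sum_integral_adjacent_intervals (fun k hk => hintIm k hk)]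
    rw [show (∑ k ∈ Finset.range n, ∫ s in T k..T (k+1), (deriv γ s / γ s).im)
        = ∑ k ∈ Finset.range n, (F (T (k+1)) - F (T k)) from
      Finset.sum_congr rfl fun k hk => (hkey k (Finset.mem_range.mp hk)).2]
    exact Finset.sum_range_sub (fun k => F (T k)) n
  have hre : indexAlong γ a b = (∫ s in a..b, (deriv γ s / γ s).im) / (2 * Real.pi) := by
    rw [indexAlong, ← intervalIntegral_im _ _ _ hint]
    set z := ∫ s in a..b, deriv γ s / γ s
    have : (1 / (2 * (Real.pi:ℂ) * Complex.I)) = ⟨0, -(2*Real.pi)⁻¹⟩ := by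
      rw [Complex.ext_iff]
      constructor <;> simp [Complex.div_re, Complex.div_im, Complex.normSq_apply]
    rw [this]
    simp [Complex.mul_re, div_eq_mul_inv]
    ring
  rw [hre, hsum]
  rw [div_lt_iff₀ (by positivity)]
  have h1 : F b < Real.pi / 2 := Real.arctan_lt_pi_div_two _
  have h2 : -(Real.pi / 2) < F a := Real.neg_pi_div_two_lt_arctan _
  nlinarith [Real.pi_pos]
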